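/- (Dimension reduction) Let d ≥ 2. Suppose that in dimension d−1, for some constant c > 0 and all n and all signs ε_R = ±1, one has sup_{x∈[0,1)^{d-1}} |Σ_{R ∈ 𝒟^{d-1}, |R| ≥ 2^{-n}} ε_R h_R(x)| ≥ c·n^{d/2}. Then in dimension d, for all n and all signs ε_R = ±1, one has sup_{x∈[0,1)^d} |Σ_{R ∈ 𝒟^d, |R| = 2^{-n}} ε_R h_R(x)| ≥ c·n^{d/2}. -/

import Mathlib

open Finset

/-- The L^∞-normalized Haar function of the dyadic interval `[m/2^k, (m+1)/2^k)`:
`-1` on the left half, `+1` on the right half, `0` outside. -/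
noncomputable def haar (k m : ℕ) (x : ℝ) : ℝ :=
  if (m : ℝ) / 2 ^ k ≤ x ∧ x < ((m : ℝ) + 1) / 2 ^ k then
    (if x < (2 * (m : ℝ) + 1) / 2 ^ (k + 1) then -1 else 1)
  else 0

/-- The tensor Haar function of the dyadic box `∏ᵢ [mᵢ/2^{kᵢ}, (mᵢ+1)/2^{kᵢ})` in `[0,1)^d`. -/
noncomputable def haarBox {d : ℕ} (k m : Fin d → ℕ) (x : Fin d → ℝ) : ℝ :=
  ∏ i, haar (k i) (m i) (x i)

/-- The hyperbolic sum `∑_{R ∈ 𝒟^d, |R| = 2^{-n}} ε_R h_R` over dyadic boxes of volume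
exactly `2^{-n}`; a box is indexed by its scales `k : Fin d → ℕ` with `∑ kᵢ = n` and its
positions `m : Fin d → ℕ` with `mᵢ < 2^{kᵢ}`. -/
noncomputable def sumEq (d n : ℕ) (ε : (Fin d → ℕ) → (Fin d → ℕ) → ℝ) (x : Fin d → ℝ) : ℝ :=
  ∑ k ∈ (Fintype.piFinset fun _ : Fin d => Finset.range (n + 1)).filter
      (fun k => ∑ i, k i = n),
    ∑ m ∈ Fintype.piFinset (fun i => Finset.range (2 ^ k i)), ε k m * haarBox k m x

/-- The hyperbolic sum `∑_{R ∈ 𝒟^d, |R| ≥ 2^{-n}} ε_R h_R` over dyadic boxes of volume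
at least `2^{-n}`, i.e. with `∑ kᵢ ≤ n`. -/
noncomputable def sumGe (d n : ℕ) (ε : (Fin d → ℕ) → (Fin d → ℕ) → ℝ) (x : Fin d → ℝ) : ℝ :=
  ∑ k ∈ (Fintype.piFinset fun _ : Fin d => Finset.range (n + 1)).filter
      (fun k => ∑ i, k i ≤ n),
    ∑ m ∈ Fintype.piFinset (fun i => Finset.range (2 ^ k i)), ε k m * haarBox k m x

/-- The unit cube `[0,1)^d`. -/
def unitCube (d : ℕ) : Set (Fin d → ℝ) := {x | ∀ i, 0 ≤ x i ∧ x i < 1}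

lemma haar_zero (k m : ℕ) : haar k m 0 = if m = 0 then (-1:ℝ) else 0 := by
  unfold haar
  rcases Nat.eq_zero_or_pos m with hm | hm
  · subst hm
    have h1 : (0:ℝ)/2^k ≤ 0 := by simp
    have h2 : (0:ℝ) < ((0:ℝ)+1)/2^k := by positivity
    have h3 : (0:ℝ) < (2*(0:ℝ)+1)/2^(k+1) := by positivity
    norm_num
  · have : ¬ ((m:ℝ)/2^k ≤ 0) := by
      push_neg; positivity
    rw [if_neg (by simp [this]), if_neg (by omega : ¬ m = 0)]

lemma abs_haar_le (k m : ℕ) (x : ℝ) : |haar k m x| ≤ 1 := by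
  unfold haar; split_ifs <;> norm_num

lemma abs_haarBox_le {d : ℕ} (k m : Fin d → ℕ) (x : Fin d → ℝ) : |haarBox k m x| ≤ 1 := by
  rw [haarBox, Finset.abs_prod]
  exact Finset.prod_le_one (fun i _ => abs_nonneg _) (fun i _ => abs_haar_le _ _ _)

lemma haarBox_snoc {e : ℕ} (k m : Fin (e+1) → ℕ) (x' : Fin e → ℝ) (t : ℝ) :
    haarBox k m (Fin.snoc x' t)
      = haarBox (Fin.init k) (Fin.init m) x' * haar (k (Fin.last e)) (m (Fin.last e)) t := by
  unfold haarBox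
  rw [Fin.prod_univ_castSucc]
  simp [Fin.init, Fin.snoc_castSucc, Fin.snoc_last]

/-- Key identity: evaluating the dimension-`d` hyperbolic sum at `(x', 0)` gives a
hyperbolic sum in dimension `d-1` with extended range. -/
lemma sumEq_snoc_zero (e n : ℕ) (ε : (Fin (e+1) → ℕ) → (Fin (e+1) → ℕ) → ℝ)
    (x' : Fin e → ℝ) :
    sumEq (e+1) n ε (Fin.snoc x' 0)
      = sumGe e n (fun k' m' => - ε (Fin.snoc k' (n - ∑ i, k' i)) (Fin.snoc m' 0)) x' := by
  unfold sumEq sumGe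
  refine Finset.sum_bij' (fun k _ => Fin.init k)
    (fun k' _ => Fin.snoc k' (n - ∑ i, k' i)) ?_ ?_ ?_ ?_ ?_
  · -- maps into target
    intro k hk
    rw [Finset.mem_filter, Fintype.mem_piFinset] at hk ⊢
    obtain ⟨h1, h2⟩ := hk
    constructor
    · intro i; exact h1 i.castSucc
    · rw [Fin.sum_univ_castSucc] at h2
      simp only [Fin.init]
      omega
  · intro k' hk'
    rw [Finset.mem_filter, Fintype.mem_piFinset] at hk' ⊢
    obtain ⟨h1, h2⟩ := hk'
    constructor
    · intro i
      refine Fin.lastCases ?_ ?_ i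
      · rw [Fin.snoc_last]; simp
      · intro j; rw [Fin.snoc_castSucc]; exact h1 j
    · rw [Fin.sum_univ_castSucc, Fin.snoc_last]
      simp only [Fin.snoc_castSucc]
      omega
  · -- left inverse
    intro k hk
    rw [Finset.mem_filter, Fintype.mem_piFinset] at hk
    obtain ⟨h1, h2⟩ := hk
    rw [Fin.sum_univ_castSucc] at h2
    have hlast : k (Fin.last e) = n - ∑ i : Fin e, Fin.init k i := by
      simp only [Fin.init]; omega
    rw [← hlast, Fin.snoc_init_self]
  · intro k' _; exact Fin.init_snoc _ _
  · -- inner sums agree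
    intro k hk
    dsimp only
    rw [Finset.mem_filter, Fintype.mem_piFinset] at hk
    obtain ⟨h1, h2⟩ := hk
    have hlast : k (Fin.last e) = n - ∑ i : Fin e, Fin.init k i := by
      rw [Fin.sum_univ_castSucc] at h2
      simp only [Fin.init]; omega
    have hkk : Fin.snoc (Fin.init k) (n - ∑ i, Fin.init k i) = k := by
      rw [← hlast, Fin.snoc_init_self]
    -- drop zero terms on the left
    rw [← Finset.sum_filter_of_ne (p := fun m => m (Fin.last e) = 0)
      (by
        intro m _ hne
        by_contra hml
        apply hne
        rw [haarBox_snoc, haar_zero, if_neg hml]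
        ring)]
    refine Finset.sum_bij' (fun m _ => Fin.init m) (fun m' _ => Fin.snoc m' 0) ?_ ?_ ?_ ?_ ?_
    · intro m hm
      rw [Finset.mem_filter, Fintype.mem_piFinset] at hm
      rw [Fintype.mem_piFinset]
      intro i
      have := hm.1 i.castSucc
      simpa [Fin.init] using this
    · intro m' hm'
      rw [Fintype.mem_piFinset] at hm'
      rw [Finset.mem_filter, Fintype.mem_piFinset]
      refine ⟨fun i => ?_, Fin.snoc_last ..⟩
      refine Fin.lastCases ?_ ?_ i
      · rw [Fin.snoc_last]; simp [Nat.pow_pos]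
      · intro j; rw [Fin.snoc_castSucc]
        have := hm' j
        simpa [Fin.init] using this
    · intro m hm
      rw [Finset.mem_filter] at hm
      rw [← hm.2, Fin.snoc_init_self]
    · intro m' _; exact Fin.init_snoc _ _
    · intro m hm
      rw [Finset.mem_filter] at hm
      rw [haarBox_snoc, haar_zero, if_pos hm.2, hkk]
      have : Fin.snoc (Fin.init m) (0:ℕ) = m := by rw [← hm.2, Fin.snoc_init_self]
      rw [this]
      ring

lemma abs_sumEq_bound (d n : ℕ) (ε : (Fin d → ℕ) → (Fin d → ℕ) → ℝ)
    (hε : ∀ k m, ε k m = 1 ∨ ε k m = -1) (x : Fin d → ℝ) :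
    |sumEq d n ε x| ≤
      ∑ k ∈ (Fintype.piFinset fun _ : Fin d => Finset.range (n + 1)).filter
          (fun k => ∑ i, k i = n),
        ∑ _m ∈ Fintype.piFinset (fun i => Finset.range (2 ^ k i)), (1:ℝ) := by
  unfold sumEq
  refine (Finset.abs_sum_le_sum_abs _ _).trans (Finset.sum_le_sum fun k _ => ?_)
  refine (Finset.abs_sum_le_sum_abs _ _).trans (Finset.sum_le_sum fun m _ => ?_)
  rw [abs_mul]
  have h1 : |ε k m| = 1 := by rcases hε k m with h | h <;> simp [h]
  rw [h1, one_mul]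
  exact abs_haarBox_le _ _ _

/-- Dimension reduction: the signed small ball inequality in dimension `d` follows from the
corresponding inequality with extended range of summation `|R| ≥ 2^{-n}` in dimension `d-1`. -/
theorem dimension_reduction (d : ℕ) (hd : 2 ≤ d) (c : ℝ) (hc : 0 < c)
    (H : ∀ n : ℕ, ∀ ε : (Fin (d - 1) → ℕ) → (Fin (d - 1) → ℕ) → ℝ,
      (∀ k m, ε k m = 1 ∨ ε k m = -1) →
      sSup ((fun x => |sumGe (d - 1) n ε x|) '' unitCube (d - 1))
        ≥ c * (n : ℝ) ^ ((d : ℝ) / 2)) :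
    ∀ n : ℕ, ∀ ε : (Fin d → ℕ) → (Fin d → ℕ) → ℝ,
      (∀ k m, ε k m = 1 ∨ ε k m = -1) →
      sSup ((fun x => |sumEq d n ε x|) '' unitCube d)
        ≥ c * (n : ℝ) ^ ((d : ℝ) / 2) := by
  obtain ⟨e, rfl⟩ : ∃ e, d = e + 1 := ⟨d - 1, by omega⟩
  intro n ε hε
  set ε' : (Fin e → ℕ) → (Fin e → ℕ) → ℝ :=
    fun k' m' => - ε (Fin.snoc k' (n - ∑ i, k' i)) (Fin.snoc m' 0) with hε'def
  have hε' : ∀ k m, ε' k m = 1 ∨ ε' k m = -1 := by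
    intro k m
    rcases hε (Fin.snoc k (n - ∑ i, k i)) (Fin.snoc m 0) with h | h
    · right; simp [hε'def, h]
    · left; simp [hε'def, h]
  have hH := H n ε' hε'
  have hsub : ((fun x' => |sumGe e n ε' x'|) '' unitCube e)
      ⊆ ((fun x => |sumEq (e+1) n ε x|) '' unitCube (e+1)) := by
    rintro y ⟨x', hx', rfl⟩
    refine ⟨Fin.snoc x' 0, ?_, ?_⟩
    · intro i
      refine Fin.lastCases ?_ ?_ i
      · rw [Fin.snoc_last]; norm_num
      · intro j; rw [Fin.snoc_castSucc]; exact hx' j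
    · simp only [sumEq_snoc_zero e n ε x', hε'def]
  have hbdd : BddAbove ((fun x => |sumEq (e+1) n ε x|) '' unitCube (e+1)) := by
    refine ⟨∑ k ∈ (Fintype.piFinset fun _ : Fin (e+1) => Finset.range (n + 1)).filter
          (fun k => ∑ i, k i = n),
        ∑ _m ∈ Fintype.piFinset (fun i => Finset.range (2 ^ k i)), (1:ℝ), ?_⟩
    rintro y ⟨x, _, rfl⟩
    exact abs_sumEq_bound (e+1) n ε hε x
  have hne : ((fun x' => |sumGe e n ε' x'|) '' unitCube e).Nonempty :=
    ⟨_, ⟨fun _ => 0, fun i => ⟨le_refl 0, one_pos⟩, rfl⟩⟩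
  calc c * (n : ℝ) ^ (((e+1 : ℕ) : ℝ) / 2)
      ≤ sSup ((fun x' => |sumGe e n ε' x'|) '' unitCube e) := hH
    _ ≤ sSup ((fun x => |sumEq (e+1) n ε x|) '' unitCube (e+1)) :=
        csSup_le_csSup hbdd hne hsub
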